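/- arXiv:0710.0635 — 2 statements merged into one kernel-verified Lean document; each statement's English description precedes it below -/
import Mathlib

section
/- Let w_1, …, w_m be linearly independent linear forms in B with 𝔽_p-span W, and let S be a system of line representatives for W. Then there exists a nonzero scalar λ ∈ 𝔽_p such that det M(w_1,…,w_m) = λ · ∏_{w∈S} w. -/
open MvPolynomial

set_option linter.unusedSectionVars false

/-- The linear form `Σ_i v_i X_i` in `B = (ZMod p)[X_1, …, X_m]` associated to a
coefficient vector `v : Fin m → ZMod p`. -/
noncomputable def linForm (p m : ℕ) (v : Fin m → ZMod p) :
    MvPolynomial (Fin m) (ZMod p) :=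
  ∑ i : Fin m, MvPolynomial.C (v i) * MvPolynomial.X i

section Aux

variable {p m : ℕ} [Fact p.Prime]

lemma linForm_smul (c : ZMod p) (u : Fin m → ZMod p) :
    linForm p m (c • u) = C c * linForm p m u := by
  simp [linForm, Finset.mul_sum, mul_assoc]

lemma linForm_sum {ι : Type*} (s : Finset ι) (f : ι → Fin m → ZMod p) :
    linForm p m (∑ i ∈ s, f i) = ∑ i ∈ s, linForm p m (f i) := by
  simp [linForm, Finset.sum_mul]
  rw [Finset.sum_comm]

lemma coeff_linForm (u : Fin m → ZMod p) (i : Fin m) :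
    coeff (Finsupp.single i 1) (linForm p m u) = u i := by
  classical
  rw [linForm, coeff_sum]
  rw [Finset.sum_eq_single i]
  · simp [coeff_C_mul, coeff_X']
  · intro j _ hj
    simp only [coeff_C_mul, coeff_X']
    rw [if_neg, mul_zero]
    intro h
    exact hj (by simpa using (Finsupp.single_left_inj (one_ne_zero)).mp h)
  · simp

lemma linForm_eq_zero_iff {u : Fin m → ZMod p} : linForm p m u = 0 ↔ u = 0 := by
  constructor
  · intro h
    funext i
    have := coeff_linForm u i
    rw [h] at this
    simpa using this.symm
  · rintro rfl
    simp [linForm]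


lemma linForm_isHomogeneous (u : Fin m → ZMod p) : (linForm p m u).IsHomogeneous 1 := by
  apply IsHomogeneous.sum
  intro i _
  exact isHomogeneous_C_mul_X _ _


lemma linForm_expand (u : Fin m → ZMod p) (i0 : Fin m) :
    linForm p m u = C (u i0) * X i0 + ∑ j ∈ Finset.univ.erase i0, C (u j) * X j := by
  rw [linForm, ← Finset.add_sum_erase _ _ (Finset.mem_univ i0)]

/-- Any nonzero linear form is prime. -/
lemma prime_linForm (hm : 1 ≤ m) {u : Fin m → ZMod p} (hu : u ≠ 0) :
    Prime (linForm p m u) := by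
  classical
  obtain ⟨k, rfl⟩ : ∃ k, m = k + 1 := ⟨m - 1, by omega⟩
  obtain ⟨i0, hi0⟩ : ∃ i0, u i0 ≠ 0 := by
    by_contra h
    push_neg at h
    exact hu (funext h)
  -- Prime (X 0)
  have hX0 : Prime (X (0 : Fin (k + 1)) : MvPolynomial (Fin (k + 1)) (ZMod p)) := by
    have h := (MulEquiv.prime_iff
      (p := (X (0 : Fin (k + 1)) : MvPolynomial (Fin (k + 1)) (ZMod p)))
      (MvPolynomial.finSuccEquiv (ZMod p) k).toRingEquiv.toMulEquiv)
    rw [← h]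
    have : (MvPolynomial.finSuccEquiv (ZMod p) k).toRingEquiv.toMulEquiv
        (X (0 : Fin (k + 1))) = Polynomial.X := by
      simpa using finSuccEquiv_X_zero (R := ZMod p) (n := k)
    rw [this]
    exact Polynomial.prime_X
  -- Prime (X i0)
  have hXi0 : Prime (X i0 : MvPolynomial (Fin (k + 1)) (ZMod p)) := by
    have h := (MulEquiv.prime_iff
      (p := (X (0 : Fin (k + 1)) : MvPolynomial (Fin (k + 1)) (ZMod p)))
      (renameEquiv (ZMod p) (Equiv.swap (0 : Fin (k + 1)) i0)).toRingEquiv.toMulEquiv).mpr hX0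
    have e : (renameEquiv (ZMod p) (Equiv.swap (0 : Fin (k + 1)) i0)).toRingEquiv.toMulEquiv
        (X (0 : Fin (k + 1))) = X i0 := by
      simp [renameEquiv, Equiv.swap_apply_left]
    rwa [e] at h
  -- the change-of-variables automorphism
  set T : Finset (Fin (k + 1)) := Finset.univ.erase i0 with hT
  set f : Fin (k + 1) → MvPolynomial (Fin (k + 1)) (ZMod p) :=
    Function.update (fun i => X i) i0 (C (u i0)⁻¹ * (X i0 - ∑ j ∈ T, C (u j) * X j)) with hf
  set g : Fin (k + 1) → MvPolynomial (Fin (k + 1)) (ZMod p) :=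
    Function.update (fun i => X i) i0 (linForm p (k + 1) u) with hg
  have hfi0 : f i0 = C (u i0)⁻¹ * (X i0 - ∑ j ∈ T, C (u j) * X j) := by
    rw [hf, Function.update_self]
  have hgi0 : g i0 = linForm p (k + 1) u := by rw [hg, Function.update_self]
  have hfj : ∀ j ∈ T, f j = X j := by
    intro j hj
    rw [hf, Function.update_of_ne (Finset.ne_of_mem_erase hj)]
  have hgj : ∀ j ∈ T, g j = X j := by
    intro j hj
    rw [hg, Function.update_of_ne (Finset.ne_of_mem_erase hj)]
  have hC : (C ((u i0) : ZMod p) : MvPolynomial (Fin (k+1)) (ZMod p)) * C (u i0)⁻¹ = 1 := by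
    rw [← C_mul, mul_inv_cancel₀ hi0, C_1]
  have halg : ∀ c : ZMod p,
      (algebraMap (ZMod p) (MvPolynomial (Fin (k+1)) (ZMod p))) c = C c := fun _ => rfl
  have haux : aeval f (linForm p (k + 1) u) = X i0 := by
    rw [linForm_expand u i0, map_add, map_mul, aeval_C, aeval_X, map_sum]
    have h2 : ∀ j ∈ T, aeval f (C (u j) * X j) = C (u j) * X j := by
      intro j hj
      rw [map_mul, aeval_C, aeval_X, hfj j hj, halg]
    rw [Finset.sum_congr rfl h2, hfi0, halg, ← mul_assoc, hC, one_mul]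
    ring
  have h1 : (aeval f).comp (aeval g) = AlgHom.id (ZMod p) (MvPolynomial (Fin (k+1)) (ZMod p)) := by
    apply MvPolynomial.algHom_ext
    intro i
    by_cases hi : i = i0
    · rw [hi]
      simp only [AlgHom.comp_apply, AlgHom.id_apply, aeval_X]
      rw [hgi0]
      exact haux
    · simp only [AlgHom.comp_apply, AlgHom.id_apply, aeval_X]
      rw [hg, Function.update_of_ne hi, aeval_X, hf, Function.update_of_ne hi]
  have h2 : (aeval g).comp (aeval f) = AlgHom.id (ZMod p) (MvPolynomial (Fin (k+1)) (ZMod p)) := by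
    apply MvPolynomial.algHom_ext
    intro i
    by_cases hi : i = i0
    · rw [hi]
      simp only [AlgHom.comp_apply, AlgHom.id_apply, aeval_X]
      rw [hfi0, map_mul, aeval_C, map_sub, aeval_X, hgi0]
      have h3 : aeval g (∑ j ∈ T, C (u j) * X j) = ∑ j ∈ T, C (u j) * X j := by
        rw [map_sum]
        apply Finset.sum_congr rfl
        intro j hj
        rw [map_mul, aeval_C, aeval_X, hgj j hj, halg]
      rw [h3, linForm_expand u i0, halg]
      rw [add_sub_cancel_right, ← mul_assoc, mul_comm (C (u i0)⁻¹), hC, one_mul]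
    · simp only [AlgHom.comp_apply, AlgHom.id_apply, aeval_X]
      rw [hf, Function.update_of_ne hi, aeval_X, hg, Function.update_of_ne hi]
  set e : MvPolynomial (Fin (k+1)) (ZMod p) ≃ₐ[ZMod p] MvPolynomial (Fin (k+1)) (ZMod p) :=
    AlgEquiv.ofAlgHom (aeval f) (aeval g) h1 h2 with he
  have hiff := (MulEquiv.prime_iff (p := linForm p (k+1) u) e.toRingEquiv.toMulEquiv)
  rw [← hiff]
  have : e.toRingEquiv.toMulEquiv (linForm p (k+1) u) = X i0 := haux
  rwa [this]

end Aux

section Aux2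

variable {p m : ℕ} [Fact p.Prime]

/-- Frobenius of an 𝔽_p-linear combination. -/
lemma frob_sum (c : Fin m → ZMod p) (w : Fin m → MvPolynomial (Fin m) (ZMod p)) (k : ℕ) :
    (∑ j, C (c j) * w j) ^ p ^ k = ∑ j, C (c j) * (w j) ^ p ^ k := by
  rw [sum_pow_char_pow]
  apply Finset.sum_congr rfl
  intro j _
  rw [mul_pow, ← map_pow, ZMod.pow_card_pow]

lemma dvd_det (w : Fin m → MvPolynomial (Fin m) (ZMod p)) (c : Fin m → ZMod p) (j0 : Fin m)
    (hc : c j0 ≠ 0) :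
    (∑ j, C (c j) * w j) ∣ (Matrix.of fun i j : Fin m => (w j) ^ p ^ (i : ℕ)).det := by
  classical
  set u : MvPolynomial (Fin m) (ZMod p) := ∑ j, C (c j) * w j with hu
  set M : Matrix (Fin m) (Fin m) (MvPolynomial (Fin m) (ZMod p)) :=
    Matrix.of fun i j : Fin m => (w j) ^ p ^ (i : ℕ) with hM
  have h1 : (M.updateCol j0 fun k => ∑ j, (C (c j) : MvPolynomial (Fin m) (ZMod p)) • M k j).det = C (c j0) • M.det :=
    Matrix.det_updateCol_sum M j0 (fun j => C (c j))
  have hcol : (fun k : Fin m => ∑ j, (C (c j) : MvPolynomial (Fin m) (ZMod p)) • M k j)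
      = u • (fun k : Fin m => u ^ (p ^ (k : ℕ) - 1)) := by
    funext k
    have e1 : ∑ j, (C (c j) : MvPolynomial (Fin m) (ZMod p)) • M k j = u ^ p ^ (k : ℕ) := by
      simp only [smul_eq_mul, hM, Matrix.of_apply]
      exact (frob_sum c w (k : ℕ)).symm
    have e2 : 1 ≤ p ^ (k : ℕ) := Nat.one_le_pow (k : ℕ) p (Fact.out : p.Prime).pos
    rw [e1, Pi.smul_apply, smul_eq_mul, ← pow_succ']
    congr 1
    omega
  rw [hcol, Matrix.det_updateCol_smul, smul_eq_mul] at h1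
  have hunit : IsUnit (C (c j0) : MvPolynomial (Fin m) (ZMod p)) :=
    (isUnit_iff_ne_zero.mpr hc).map (C : ZMod p →+* MvPolynomial (Fin m) (ZMod p))
  exact (hunit.dvd_mul_left).mp ⟨_, h1.symm⟩

end Aux2

section Aux3

variable {p m : ℕ} [Fact p.Prime]

lemma det_ne_zero (hm : 1 ≤ m) (v : Fin m → Fin m → ZMod p)
    (hind : LinearIndependent (ZMod p) (fun j => linForm p m (v j))) :
    (Matrix.of fun i j : Fin m => (linForm p m (v j)) ^ p ^ (i : ℕ)).det ≠ 0 := by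
  classical
  intro h0
  set F := FractionRing (MvPolynomial (Fin m) (ZMod p)) with hF
  set φ : MvPolynomial (Fin m) (ZMod p) →+* F := algebraMap _ F with hφ
  have hinj : Function.Injective φ := IsFractionRing.injective _ _
  set M' : Matrix (Fin m) (Fin m) F :=
    (Matrix.of fun i j : Fin m => (linForm p m (v j)) ^ p ^ (i : ℕ)).map φ with hM'
  have hdet' : M'.det = 0 := by
    rw [hM', ← RingHom.mapMatrix_apply, ← RingHom.map_det, h0, map_zero]
  obtain ⟨b, hb0, hb⟩ := Matrix.exists_vecMul_eq_zero_iff.mpr hdet'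
  have hb' : ∀ j, ∑ i, b i * φ (linForm p m (v j)) ^ p ^ (i : ℕ) = 0 := by
    intro j
    have h := congrFun hb j
    simpa [Matrix.vecMul, dotProduct, hM', map_pow] using h
  obtain ⟨i0, hi0⟩ : ∃ i0, b i0 ≠ 0 := by
    by_contra h
    push_neg at h
    exact hb0 (funext h)
  have hppos : 1 < p := (Fact.out : p.Prime).one_lt
  set L : Polynomial F := ∑ i : Fin m, Polynomial.C (b i) * Polynomial.X ^ (p ^ (i : ℕ)) with hL
  have hcoeff : L.coeff (p ^ (i0 : ℕ)) = b i0 := by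
    rw [hL, Polynomial.finset_sum_coeff, Finset.sum_eq_single i0]
    · simp [Polynomial.coeff_C_mul, Polynomial.coeff_X_pow]
    · intro j _ hj
      simp only [Polynomial.coeff_C_mul, Polynomial.coeff_X_pow]
      rw [if_neg, mul_zero]
      intro hpow
      exact hj (Fin.ext (Nat.pow_right_injective hppos hpow.symm))
    · simp
  have hLne : L ≠ 0 := fun h => hi0 (by rw [h] at hcoeff; simpa using hcoeff.symm)
  have hdeg : L.natDegree < p ^ m := by
    have h1 : L.natDegree ≤ p ^ (m - 1) := by
      rw [hL]
      apply Polynomial.natDegree_sum_le_of_forall_le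
      intro i _
      refine (Polynomial.natDegree_C_mul_le _ _).trans ?_
      rw [Polynomial.natDegree_X_pow]
      exact Nat.pow_le_pow_right (by omega) (by omega)
    exact lt_of_le_of_lt h1 (Nat.pow_lt_pow_right hppos (by omega))
  set ψ : (Fin m → ZMod p) → F := fun c => φ (∑ j, C (c j) * linForm p m (v j)) with hψ
  have hψinj : Function.Injective ψ := by
    intro c c' hcc
    have h1 : ∑ j, C (c j) * linForm p m (v j) = ∑ j, C (c' j) * linForm p m (v j) := hinj hcc
    have h2 : ∑ j, (c j - c' j) • linForm p m (v j) = 0 := by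
      simp only [sub_smul, smul_eq_C_mul, Finset.sum_sub_distrib, h1, sub_self]
    have h3 := linearIndependent_iff'.mp hind Finset.univ _ h2
    funext j
    exact sub_eq_zero.mp (h3 j (Finset.mem_univ j))
  have hcard : (Finset.univ.image ψ).card = p ^ m := by
    rw [Finset.card_image_of_injective _ hψinj, Finset.card_univ]
    simp [ZMod.card]
  have hvan : ∀ t ∈ Finset.univ.image ψ, L.eval t = 0 := by
    intro t ht
    obtain ⟨c, _, rfl⟩ := Finset.mem_image.mp ht
    have hpow : ∀ i : Fin m,
        (ψ c) ^ p ^ (i : ℕ) = ∑ j, φ (C (c j)) * φ (linForm p m (v j)) ^ p ^ (i : ℕ) := by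
      intro i
      rw [hψ, ← map_pow, frob_sum, map_sum]
      simp [map_mul, map_pow]
    rw [hL, Polynomial.eval_finset_sum]
    simp only [Polynomial.eval_mul, Polynomial.eval_C, Polynomial.eval_pow, Polynomial.eval_X]
    calc ∑ i, b i * (ψ c) ^ p ^ (i : ℕ)
        = ∑ i, ∑ j, φ (C (c j)) * (b i * φ (linForm p m (v j)) ^ p ^ (i : ℕ)) := by
          apply Finset.sum_congr rfl
          intro i _
          rw [hpow i, Finset.mul_sum]
          apply Finset.sum_congr rfl
          intro j _
          ring
      _ = ∑ j, φ (C (c j)) * (∑ i, b i * φ (linForm p m (v j)) ^ p ^ (i : ℕ)) := by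
          rw [Finset.sum_comm]
          refine Finset.sum_congr rfl fun j _ => ?_
          rw [Finset.mul_sum]
      _ = 0 := by simp [hb']
  have := Polynomial.eq_zero_of_natDegree_lt_card_of_eval_eq_zero' L _ hvan
    (by rw [hcard]; exact hdeg)
  exact hLne this

end Aux3

/-- A system of line representatives for a subspace `W` of an `𝔽_p`-module:
a finite set of nonzero elements of `W` such that every nonzero element of `W`
is a scalar multiple of exactly one element of the set. -/
def IsLineReps {p : ℕ} {M : Type*} [AddCommGroup M] [Module (ZMod p) M]
    (W : Submodule (ZMod p) M) (S : Finset M) : Prop :=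
  (∀ w ∈ S, w ∈ W ∧ w ≠ 0) ∧
    ∀ w ∈ W, w ≠ 0 → ∃! u, u ∈ S ∧ ∃ c : ZMod p, w = c • u

section Aux4

variable {p m : ℕ} [Fact p.Prime]

lemma eq_C_of_mul_homogeneous {σ : Type*} {R : Type*} [CommRing R] [IsDomain R]
    {f g q : MvPolynomial σ R} {n : ℕ}
    (hf : f.IsHomogeneous n) (hg : g.IsHomogeneous n) (hgne : g ≠ 0) (h : f = g * q) :
    ∃ c : R, q = C c := by
  classical
  have key : ∀ k : ℕ, k ≠ 0 → homogeneousComponent k q = 0 := by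
    intro k hk
    by_cases hk2 : q.totalDegree < k
    · exact homogeneousComponent_eq_zero _ _ hk2
    push_neg at hk2
    have hsum : f = ∑ j ∈ Finset.range (q.totalDegree + 1), g * homogeneousComponent j q := by
      rw [h, ← Finset.mul_sum, sum_homogeneousComponent]
    have h1 : homogeneousComponent (n + k) f = 0 := by
      rw [homogeneousComponent_of_mem ((mem_homogeneousSubmodule _ _).mpr hf),
        if_neg (by omega)]
    have h2 : homogeneousComponent (n + k) f = g * homogeneousComponent k q := by
      rw [hsum, map_sum, Finset.sum_eq_single k]
      · rw [homogeneousComponent_of_mem ((mem_homogeneousSubmodule _ _).mpr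
          (hg.mul (homogeneousComponent_isHomogeneous k q))), if_pos rfl]
      · intro j _ hjk
        rw [homogeneousComponent_of_mem ((mem_homogeneousSubmodule _ _).mpr
          (hg.mul (homogeneousComponent_isHomogeneous j q))), if_neg (by omega)]
      · intro hknot
        exact absurd (Finset.mem_range.mpr (by omega)) hknot
    rcases mul_eq_zero.mp (h1.symm.trans h2).symm with hcase | hcase
    · exact absurd hcase hgne
    · exact hcase
  refine ⟨coeff 0 q, ?_⟩
  calc q = ∑ j ∈ Finset.range (q.totalDegree + 1), homogeneousComponent j q :=
        (sum_homogeneousComponent q).symm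
    _ = homogeneousComponent 0 q :=
        Finset.sum_eq_single 0 (fun j _ hj => key j hj)
          (fun h0 => absurd (Finset.mem_range.mpr (Nat.succ_pos _)) h0)
    _ = C (coeff 0 q) := homogeneousComponent_zero q

lemma prod_primes_dvd'' {α : Type*} [CommMonoidWithZero α] [IsCancelMulZero α] (S : Finset α) :
    (∀ w ∈ S, Prime w) → (∀ w ∈ S, ∀ w' ∈ S, Associated w w' → w = w') →
    ∀ d : α, (∀ w ∈ S, w ∣ d) → (∏ w ∈ S, w) ∣ d := by
  classical
  induction S using Finset.induction_on with
  | empty => intro _ _ d _; simpa using one_dvd d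
  | @insert a s ha ih =>
    intro hp hna d hd
    obtain ⟨e, rfl⟩ := hd a (Finset.mem_insert_self a s)
    rw [Finset.prod_insert ha]
    have hdvd : ∀ w ∈ s, w ∣ e := by
      intro x hx
      have hpx := hp x (Finset.mem_insert_of_mem hx)
      rcases hpx.2.2 a e (hd x (Finset.mem_insert_of_mem hx)) with hcase | hcase
      · exfalso
        have hassoc : Associated x a :=
          hpx.associated_of_dvd (hp a (Finset.mem_insert_self a s)) hcase
        have := hna x (Finset.mem_insert_of_mem hx) a (Finset.mem_insert_self a s) hassoc
        rw [this] at hx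
        exact ha hx
      · exact hcase
    exact mul_dvd_mul_left a (ih (fun w hw => hp w (Finset.mem_insert_of_mem hw))
      (fun w hw w' hw' => hna w (Finset.mem_insert_of_mem hw) w' (Finset.mem_insert_of_mem hw'))
      e hdvd)

lemma det_isHomogeneous (w : Fin m → MvPolynomial (Fin m) (ZMod p))
    (hw : ∀ j, (w j).IsHomogeneous 1) :
    ((Matrix.of fun i j : Fin m => (w j) ^ p ^ (i : ℕ)).det).IsHomogeneous
      (∑ i ∈ Finset.range m, p ^ i) := by
  classical
  rw [Matrix.det_apply']
  apply IsHomogeneous.sum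
  intro σ _
  have hterm : (∏ i : Fin m, (Matrix.of fun i j : Fin m => (w j) ^ p ^ (i : ℕ)) (σ i) i
      ).IsHomogeneous (∑ i ∈ Finset.range m, p ^ i) := by
    have h1 := IsHomogeneous.prod Finset.univ
      (fun i : Fin m => (w i) ^ p ^ ((σ i : Fin m) : ℕ)) (fun i => p ^ ((σ i : Fin m) : ℕ))
      (fun i _ => by simpa using (hw i).pow (p ^ ((σ i : Fin m) : ℕ)))
    have h2 : ∑ i : Fin m, p ^ ((σ i : Fin m) : ℕ) = ∑ i ∈ Finset.range m, p ^ i := by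
      rw [Equiv.sum_comp σ (fun i : Fin m => p ^ (i : ℕ))]
      exact Fin.sum_univ_eq_sum_range _ m
    rw [← h2]
    simpa [Matrix.of_apply] using h1
  have hcast : ((Equiv.Perm.sign σ : ℤ) : MvPolynomial (Fin m) (ZMod p))
      = C ((Equiv.Perm.sign σ : ℤ) : ZMod p) :=
    (map_intCast (C : ZMod p →+* MvPolynomial (Fin m) (ZMod p)) _).symm
  rw [hcast]
  exact hterm.C_mul _

end Aux4

section Aux5

variable {p m : ℕ} [Fact p.Prime]

lemma card_S (v : Fin m → Fin m → ZMod p)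
    (hind : LinearIndependent (ZMod p) (fun j => linForm p m (v j)))
    (S : Finset (MvPolynomial (Fin m) (ZMod p)))
    (hS : IsLineReps (Submodule.span (ZMod p) (Set.range fun j => linForm p m (v j))) S) :
    S.card = ∑ i ∈ Finset.range m, p ^ i := by
  classical
  have hp2 : 2 ≤ p := (Fact.out : p.Prime).two_le
  set W : Submodule (ZMod p) (MvPolynomial (Fin m) (ZMod p)) :=
    Submodule.span (ZMod p) (Set.range fun j => linForm p m (v j)) with hW
  haveI : Module.Finite (ZMod p) W := Module.Finite.span_of_finite _ (Set.finite_range _)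
  haveI : Finite W := Module.finite_of_finite (ZMod p)
  haveI : Fintype W := Fintype.ofFinite _
  haveI : NoZeroSMulDivisors (ZMod p) (MvPolynomial (Fin m) (ZMod p)) := by
    infer_instance
  have hfr : Module.finrank (ZMod p) W = m := by
    rw [hW]
    rw [finrank_span_eq_card hind]
    simp
  have hcW : Fintype.card W = p ^ m := by
    rw [Module.card_eq_pow_finrank (K := ZMod p) (V := W), hfr, ZMod.card]
  -- the bijection between S × (nonzero scalars) and nonzero elements of W
  set g : (↥S × {c : ZMod p // c ≠ 0}) → {x : MvPolynomial (Fin m) (ZMod p) // x ∈ W ∧ x ≠ 0} := fun uc =>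
    ⟨(uc.2 : ZMod p) • (uc.1 : MvPolynomial (Fin m) (ZMod p)),
      W.smul_mem _ (hS.1 _ uc.1.2).1,
      smul_ne_zero uc.2.2 (hS.1 _ uc.1.2).2⟩ with hg
  have hbij : Function.Bijective g := by
    constructor
    · rintro ⟨⟨u, hu⟩, ⟨c, hc⟩⟩ ⟨⟨u', hu'⟩, ⟨c', hc'⟩⟩ heq
      have heq' : c • u = c' • u' := congrArg Subtype.val heq
      have hxW : c • u ∈ W := W.smul_mem _ (hS.1 _ hu).1
      have hxne : c • u ≠ 0 := smul_ne_zero hc (hS.1 _ hu).2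
      obtain ⟨y, _, hyuniq⟩ := hS.2 _ hxW hxne
      have h1 : u = y := hyuniq u ⟨hu, c, rfl⟩
      have h2 : u' = y := hyuniq u' ⟨hu', c', heq'⟩
      have huu : u = u' := h1.trans h2.symm
      subst huu
      have hcc : c = c' := by
        have := heq'
        exact smul_left_injective (ZMod p) (hS.1 _ hu).2 this
      subst hcc
      rfl
    · rintro ⟨x, hxW, hxne⟩
      obtain ⟨u, ⟨huS, c, hcu⟩, _⟩ := hS.2 x hxW hxne
      have hc0 : c ≠ 0 := by
        rintro rfl
        rw [zero_smul] at hcu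
        exact hxne hcu
      exact ⟨⟨⟨u, huS⟩, ⟨c, hc0⟩⟩, Subtype.ext hcu.symm⟩
  have hcards : S.card * (p - 1) = p ^ m - 1 := by
    have h1 := Nat.card_congr (Equiv.ofBijective g hbij)
    rw [Nat.card_prod] at h1
    have h2 : Nat.card ↥S = S.card := Nat.card_eq_finsetCard S
    have h3 : Nat.card {c : ZMod p // c ≠ 0} = p - 1 := by
      rw [← Nat.card_congr (unitsEquivNeZero (G₀ := ZMod p)), Nat.card_eq_fintype_card,
        ZMod.card_units p]
    have h4 : Nat.card {x : MvPolynomial (Fin m) (ZMod p) // x ∈ W ∧ x ≠ 0} = p ^ m - 1 := by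
      have e2 : {x : MvPolynomial (Fin m) (ZMod p) // x ∈ W ∧ x ≠ 0} ≃ {y : ↥W // ¬ (y = 0)} :=
        { toFun := fun x => ⟨⟨x.1, x.2.1⟩, fun h => x.2.2 (by
            have := congrArg Subtype.val h
            simpa using this)⟩
          invFun := fun y => ⟨(y.1 : MvPolynomial (Fin m) (ZMod p)), y.1.2, fun h => y.2 (Subtype.ext h)⟩
          left_inv := fun x => rfl
          right_inv := fun y => rfl }
      rw [Nat.card_congr e2, Nat.card_eq_fintype_card,
        Fintype.card_subtype_compl, Fintype.card_subtype_eq (0 : ↥W), hcW]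
    rw [h2, h3, h4] at h1
    exact h1
  -- geometric series
  have hgeom : (∑ i ∈ Finset.range m, p ^ i) * (p - 1) = p ^ m - 1 := by
    have h := geom_sum_mul (p : ℤ) m
    have h1 : ((∑ i ∈ Finset.range m, p ^ i : ℕ) : ℤ) * ((p : ℤ) - 1) = (p : ℤ) ^ m - 1 := by
      push_cast
      exact h
    have h2 : ((p : ℤ) - 1) = ((p - 1 : ℕ) : ℤ) := by
      have : (1 : ℕ) ≤ p := by omega
      push_cast [this]
      ring
    have h3 : ((p : ℤ) ^ m - 1) = ((p ^ m - 1 : ℕ) : ℤ) := by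
      have : (1 : ℕ) ≤ p ^ m := Nat.one_le_pow _ _ (by omega)
      push_cast [this]
      ring
    rw [h2, h3] at h1
    exact_mod_cast h1
  have hpos : 0 < p - 1 := by omega
  exact Nat.eq_of_mul_eq_mul_right hpos (hcards.trans hgeom.symm)

end Aux5

/-- if `w_1, …, w_m` are linearly independent linear forms with span `W`
and `S` is a system of line representatives for `W`, then
`det M(w_1,…,w_m) = λ · ∏_{w ∈ S} w` for some nonzero scalar `λ ∈ 𝔽_p`. -/
theorem stmt2 (p m : ℕ) [Fact p.Prime] (hm : 1 ≤ m)
    (v : Fin m → Fin m → ZMod p)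
    (hind : LinearIndependent (ZMod p) (fun j => linForm p m (v j)))
    (S : Finset (MvPolynomial (Fin m) (ZMod p)))
    (hS : IsLineReps (Submodule.span (ZMod p) (Set.range fun j => linForm p m (v j))) S) :
    ∃ lam : ZMod p, lam ≠ 0 ∧
      Matrix.det (Matrix.of fun i j : Fin m => (linForm p m (v j)) ^ p ^ (i : ℕ)) =
        MvPolynomial.C lam * ∏ w ∈ S, w := by
  classical
  set W := Submodule.span (ZMod p) (Set.range fun j => linForm p m (v j)) with hW
  set M := Matrix.of fun i j : Fin m => (linForm p m (v j)) ^ p ^ (i : ℕ) with hM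
  have hrep : ∀ x ∈ W, ∃ c : Fin m → ZMod p,
      x = linForm p m (∑ j, c j • v j) ∧ x = ∑ j, C (c j) * linForm p m (v j) := by
    intro x hx
    obtain ⟨c, hc⟩ := (Submodule.mem_span_range_iff_exists_fun (ZMod p)).mp hx
    refine ⟨c, ?_, ?_⟩
    · rw [linForm_sum, ← hc]
      exact (Finset.sum_congr rfl fun j _ => by rw [linForm_smul, smul_eq_C_mul]).symm
    · rw [← hc]
      exact (Finset.sum_congr rfl fun j _ => by rw [smul_eq_C_mul]).symm
  have hfacts : ∀ u ∈ S, Prime u ∧ u.IsHomogeneous 1 ∧ u ∣ M.det := by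
    intro u huS
    obtain ⟨huW, hune⟩ := hS.1 u huS
    obtain ⟨c, hc1, hc2⟩ := hrep u huW
    have hcne : (∑ j, c j • v j) ≠ 0 := by
      intro h
      rw [h] at hc1
      exact hune (hc1.trans (linForm_eq_zero_iff.mpr rfl))
    have hchom : u.IsHomogeneous 1 := hc1 ▸ linForm_isHomogeneous _
    refine ⟨hc1 ▸ prime_linForm hm hcne, hchom, ?_⟩
    obtain ⟨j0, hj0⟩ : ∃ j0, c j0 ≠ 0 := by
      by_contra h
      push_neg at h
      apply hune
      rw [hc2]
      simp [h]
    rw [hc2, hM]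
    exact dvd_det (fun j => linForm p m (v j)) c j0 hj0
  have hna : ∀ u ∈ S, ∀ u' ∈ S, Associated u u' → u = u' := by
    intro u hu u' hu' hass
    obtain ⟨t, ht⟩ := hass
    have hhom := (hfacts u hu).2.1
    have hhom' := (hfacts u' hu').2.1
    have hune := (hS.1 u hu).2
    obtain ⟨lam, hlam⟩ := eq_C_of_mul_homogeneous hhom' hhom hune ht.symm
    have hx : u' = lam • u := by
      rw [← ht, hlam, smul_eq_C_mul, mul_comm]
    obtain ⟨y, _, hyun⟩ := hS.2 u' (hS.1 u' hu').1 (hS.1 u' hu').2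
    have h1 : u' = y := hyun u' ⟨hu', 1, (one_smul _ _).symm⟩
    have h2 : u = y := hyun u ⟨hu, lam, hx⟩
    exact h2.trans h1.symm
  have hdvd : (∏ w ∈ S, w) ∣ M.det :=
    prod_primes_dvd'' S (fun w hw => (hfacts w hw).1) hna M.det (fun w hw => (hfacts w hw).2.2)
  obtain ⟨q, hq⟩ := hdvd
  have hdetne : M.det ≠ 0 := by
    rw [hM]
    exact det_ne_zero hm v hind
  have hdeth : M.det.IsHomogeneous (∑ i ∈ Finset.range m, p ^ i) := by
    rw [hM]
    exact det_isHomogeneous _ (fun j => linForm_isHomogeneous _)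
  have hprodh : (∏ w ∈ S, w).IsHomogeneous (∑ i ∈ Finset.range m, p ^ i) := by
    have h := IsHomogeneous.prod S id (fun _ => 1) (fun w hw => (hfacts w hw).2.1)
    rw [Finset.sum_const, smul_eq_mul, mul_one] at h
    rw [← card_S v hind S hS]
    simpa using h
  have hprodne : (∏ w ∈ S, w) ≠ 0 := by
    apply Finset.prod_ne_zero_iff.mpr
    intro w hw
    exact (hS.1 w hw).2
  obtain ⟨lam, hlam⟩ := eq_C_of_mul_homogeneous hdeth hprodh hprodne hq
  refine ⟨lam, ?_, ?_⟩
  · intro h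
    rw [h, C_0] at hlam
    rw [hlam, mul_zero] at hq
    exact hdetne hq
  · rw [hq, hlam, mul_comm]
end

section
/- Let w_1, …, w_m be linearly independent linear forms in B and let d_1, …, d_m be natural numbers. Then det M(w_1,…,w_m; d_1,…,d_m) is nonzero if and only if d_1, …, d_m are pairwise distinct. -/
open MvPolynomial

/-- `linForm` as a linear map. -/
noncomputable def linFormL (p m : ℕ) :
    (Fin m → ZMod p) →ₗ[ZMod p] MvPolynomial (Fin m) (ZMod p) where
  toFun v := linForm p m v
  map_add' a b := by
    simp [linForm, add_mul, Finset.sum_add_distrib]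
  map_smul' c a := by
    simp [linForm, Finset.mul_sum, mul_assoc, MvPolynomial.smul_eq_C_mul]

lemma linForm_single (p m : ℕ) (i : Fin m) :
    linForm p m (fun j => if i = j then 1 else 0) = MvPolynomial.X i := by
  simp [linForm, ite_mul, Finset.sum_ite_eq]

/-- products of powers of variables are monomials -/
lemma prod_X_pow (p m : ℕ) (f : Fin m → ℕ) :
    (∏ i : Fin m, (MvPolynomial.X i : MvPolynomial (Fin m) (ZMod p)) ^ f i) =
      MvPolynomial.monomial (Finsupp.equivFunOnFinite.symm f) 1 := by
  rw [← MvPolynomial.prod_X_pow_eq_monomial]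
  refine (Finset.prod_subset (Finset.subset_univ _) ?_).symm
  intro x _ hx
  have : (Finsupp.equivFunOnFinite.symm f) x = 0 := by
    simpa using Finsupp.notMem_support_iff.mp hx
  simp only [Finsupp.coe_equivFunOnFinite_symm] at this ⊢
  simp [this]

/-- The key case: the determinant of the matrix of powers of the variables themselves
is nonzero when the `d i` are pairwise distinct. -/
lemma det_X_pow_ne_zero (p m : ℕ) [Fact p.Prime] (d : Fin m → ℕ)
    (hd : Function.Injective d) :
    Matrix.det (Matrix.of fun i j : Fin m =>
      (MvPolynomial.X j : MvPolynomial (Fin m) (ZMod p)) ^ p ^ d i) ≠ 0 := by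
  set t : Fin m →₀ ℕ := Finsupp.equivFunOnFinite.symm (fun i => p ^ d i) with ht
  have hp2 : 2 ≤ p := (Fact.out : p.Prime).two_le
  have hcoeff : MvPolynomial.coeff t
      (Matrix.det (Matrix.of fun i j : Fin m =>
        (MvPolynomial.X j : MvPolynomial (Fin m) (ZMod p)) ^ p ^ d i)) = 1 := by
    rw [Matrix.det_apply]
    have hprod : ∀ σ : Equiv.Perm (Fin m),
        (∏ i, (Matrix.of fun i j : Fin m =>
          (MvPolynomial.X j : MvPolynomial (Fin m) (ZMod p)) ^ p ^ d i) (σ i) i)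
        = MvPolynomial.monomial (Finsupp.equivFunOnFinite.symm (fun i => p ^ d (σ i))) 1 := by
      intro σ
      rw [← prod_X_pow p m (fun i => p ^ d (σ i))]
      rfl
    rw [MvPolynomial.coeff_sum]
    have h1 : ∀ σ : Equiv.Perm (Fin m),
        MvPolynomial.coeff t (Equiv.Perm.sign σ • ∏ i, (Matrix.of fun i j : Fin m =>
          (MvPolynomial.X j : MvPolynomial (Fin m) (ZMod p)) ^ p ^ d i) (σ i) i)
        = Equiv.Perm.sign σ • (if σ = 1 then (1 : ZMod p) else 0) := by
      intro σ
      rw [hprod σ]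
      have : MvPolynomial.coeff t
          (MvPolynomial.monomial (Finsupp.equivFunOnFinite.symm (fun i => p ^ d (σ i)))
            (1 : ZMod p)) = if σ = 1 then (1 : ZMod p) else 0 := by
        rw [MvPolynomial.coeff_monomial]
        congr 1
        simp only [eq_iff_iff]
        constructor
        · intro h
          apply Equiv.ext
          intro i
          have h2 : (Finsupp.equivFunOnFinite.symm (fun i => p ^ d (σ i)) : Fin m → ℕ)
              = (t : Fin m → ℕ) := congrArg _ h
          have h3 : p ^ d (σ i) = p ^ d i := by
            have := congrFun h2 i
            simpa [ht] using this
          have := Nat.pow_right_injective hp2 h3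
          simpa using hd this
        · rintro rfl
          simp [ht]
      rw [Units.smul_def, Units.smul_def, MvPolynomial.coeff_smul, this]
    rw [Finset.sum_congr rfl (fun σ _ => h1 σ)]
    rw [Finset.sum_eq_single_of_mem (1 : Equiv.Perm (Fin m)) (Finset.mem_univ _)]
    · simp
    · intro σ _ hσ
      simp [hσ]
  intro h
  rw [h] at hcoeff
  simp only [MvPolynomial.coeff_zero] at hcoeff
  exact one_ne_zero hcoeff.symm

/-- for linearly independent linear forms `w_1, …, w_m`,
`det M(w_1,…,w_m; d_1,…,d_m) ≠ 0` if and only if `d_1, …, d_m` are pairwise distinct. -/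
theorem stmt3 (p m : ℕ) [Fact p.Prime] (hm : 1 ≤ m)
    (v : Fin m → Fin m → ZMod p)
    (hind : LinearIndependent (ZMod p) (fun j => linForm p m (v j)))
    (d : Fin m → ℕ) :
    Matrix.det (Matrix.of fun i j : Fin m => (linForm p m (v j)) ^ p ^ d i) ≠ 0 ↔
      Function.Injective d := by
  constructor
  · -- if det ≠ 0 then d injective
    intro hdet
    by_contra hinj
    apply hdet
    simp only [Function.Injective, not_forall] at hinj
    obtain ⟨i, j, hdij, hij⟩ := hinj
    apply Matrix.det_zero_of_row_eq hij
    funext k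
    simp [Matrix.of_apply, hdij]
  · -- if d injective then det ≠ 0
    intro hd
    -- the substitution homomorphism σ sending X i to linForm (v i)
    set σ : MvPolynomial (Fin m) (ZMod p) →ₐ[ZMod p] MvPolynomial (Fin m) (ZMod p) :=
      MvPolynomial.aeval (fun i => linForm p m (v i)) with hσ
    -- v is linearly independent as a family of vectors
    have hvind : LinearIndependent (ZMod p) v := by
      have : (fun j => linForm p m (v j)) = (linFormL p m) ∘ v := rfl
      rw [this] at hind
      exact LinearIndependent.of_comp _ hind
    -- hence the coefficient matrix is invertible
    set V : Matrix (Fin m) (Fin m) (ZMod p) := Matrix.of v with hV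
    have hVunit : IsUnit V := Matrix.linearIndependent_rows_iff_isUnit.mp hvind
    have hVV : V * V⁻¹ = 1 :=
      Matrix.mul_nonsing_inv V ((Matrix.isUnit_iff_isUnit_det V).mp hVunit)
    -- τ is a left inverse of σ on generators
    set τ : MvPolynomial (Fin m) (ZMod p) →ₐ[ZMod p] MvPolynomial (Fin m) (ZMod p) :=
      MvPolynomial.aeval (fun i => linForm p m (V⁻¹ i)) with hτ
    have hτσ : ∀ q, τ (σ q) = q := by
      have hgen : ∀ i, τ (σ (MvPolynomial.X i)) = MvPolynomial.X i := by
        intro i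
        have h1 : σ (MvPolynomial.X i) = linForm p m (v i) := by
          simp [hσ]
        rw [h1]
        have h2 : τ (linForm p m (v i)) = ∑ k, MvPolynomial.C (v i k) * linForm p m (V⁻¹ k) := by
          simp [hτ, linForm, map_sum]
        rw [h2]
        have h3 : ∀ k, MvPolynomial.C (v i k) * linForm p m (V⁻¹ k)
            = linFormL p m ((v i k) • (V⁻¹ k)) := by
          intro k
          rw [map_smul]
          simp [linFormL, MvPolynomial.smul_eq_C_mul]
          exact Or.inl rfl
        rw [Finset.sum_congr rfl (fun k _ => h3 k), ← map_sum]
        have h4 : (∑ k, (v i k) • (V⁻¹ k)) = fun j => if i = j then 1 else 0 := by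
          funext j
          have := congrFun (congrFun (congrArg (fun M => (M : Matrix (Fin m) (Fin m) (ZMod p))) hVV) i) j
          simp only [Matrix.mul_apply, Matrix.one_apply] at this
          simpa [Finset.sum_apply, Pi.smul_apply, smul_eq_mul, hV] using this
        rw [h4]
        exact linForm_single p m i
      intro q
      have : (τ.comp σ) = AlgHom.id (ZMod p) (MvPolynomial (Fin m) (ZMod p)) :=
        MvPolynomial.algHom_ext (fun i => hgen i)
      calc τ (σ q) = (τ.comp σ) q := rfl
        _ = q := by rw [this]; rfl
    have hσinj : Function.Injective σ := by
      intro a b hab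
      have := congrArg τ hab
      rwa [hτσ, hτσ] at this
    -- express the matrix as the image of the variables matrix under σ
    have hmap : (Matrix.of fun i j : Fin m => (linForm p m (v j)) ^ p ^ d i)
        = (Matrix.of fun i j : Fin m =>
            (MvPolynomial.X j : MvPolynomial (Fin m) (ZMod p)) ^ p ^ d i).map σ := by
      funext i j
      simp [Matrix.map_apply, map_pow, hσ]
    have hdet : Matrix.det (Matrix.of fun i j : Fin m => (linForm p m (v j)) ^ p ^ d i)
        = σ (Matrix.det (Matrix.of fun i j : Fin m =>
            (MvPolynomial.X j : MvPolynomial (Fin m) (ZMod p)) ^ p ^ d i)) := by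
      rw [hmap]
      exact (σ.toRingHom.map_det (Matrix.of fun i j : Fin m =>
        (MvPolynomial.X j : MvPolynomial (Fin m) (ZMod p)) ^ p ^ d i)).symm
    rw [hdet]
    intro h
    apply det_X_pow_ne_zero p m d hd
    exact hσinj (h.trans (map_zero σ).symm)
end
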